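/- Let Λ = Z_2[[T]] and let X be a finitely generated Λ-module such that E_0(X) + (2,T)^n = (2, T^2) + (2,T)^n for all n ≥ 3 (equivalently E_0(X) + (2,T)^3 = (2,T^2)). Then E_0(X) = (2, T^2). More precisely: if I is an ideal of Λ with I + (2,T)^3 = (2,T^2), then I + (2,T)^n = (2,T^2) for all n ≥ 3 (by induction using (2,T)^n ⊆ (2,T)^{n-2}(2,T^2)), hence I = (2,T^2) since the ideals (2,T)^n intersect to 0. -/

import Mathlib

set_option maxHeartbeats 2000000

open PowerSeries

private lemma stmt7_M_sq_le :
    (Ideal.span {(2 : PowerSeries ℤ_[2]), PowerSeries.X}) ^ 2 ≤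
      Ideal.span {(2 : PowerSeries ℤ_[2]), PowerSeries.X ^ 2} := by
  have h2 : (2 : PowerSeries ℤ_[2]) ∈ Ideal.span {(2 : PowerSeries ℤ_[2]), PowerSeries.X ^ 2} :=
    Ideal.subset_span (by simp)
  have hX2 : (PowerSeries.X ^ 2 : PowerSeries ℤ_[2]) ∈
      Ideal.span {(2 : PowerSeries ℤ_[2]), PowerSeries.X ^ 2} :=
    Ideal.subset_span (by simp)
  rw [pow_two, Ideal.mul_le]
  intro r hr s hs
  obtain ⟨a, b, rfl⟩ := Ideal.mem_span_pair.mp hr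
  obtain ⟨c, d, rfl⟩ := Ideal.mem_span_pair.mp hs
  have hEq : (a * 2 + b * PowerSeries.X) * (c * 2 + d * PowerSeries.X) =
      2 * (a * (c * 2 + d * PowerSeries.X) + b * PowerSeries.X * c) +
        PowerSeries.X ^ 2 * (b * d) := by ring
  rw [hEq]
  exact Ideal.add_mem _ (Ideal.mul_mem_right _ _ h2) (Ideal.mul_mem_right _ _ hX2)

private lemma stmt7_M_le_jac :
    Ideal.span {(2 : PowerSeries ℤ_[2]), PowerSeries.X} ≤ Ideal.jacobson ⊥ := by
  rw [IsLocalRing.jacobson_eq_maximalIdeal ⊥ bot_ne_top, Ideal.span_le]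
  rintro x hx
  simp only [Set.mem_insert_iff, Set.mem_singleton_iff] at hx
  rcases hx with rfl | rfl
  · rw [SetLike.mem_coe, IsLocalRing.mem_maximalIdeal, mem_nonunits_iff,
      PowerSeries.isUnit_iff_constantCoeff]
    simp only [map_ofNat]
    rw [PadicInt.isUnit_iff]
    have : ((2 : ℕ) : ℤ_[2]) = (2 : ℤ_[2]) := by norm_num
    rw [← this, PadicInt.norm_p]
    norm_num
  · rw [SetLike.mem_coe, IsLocalRing.mem_maximalIdeal, mem_nonunits_iff,
      PowerSeries.isUnit_iff_constantCoeff]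
    simp

/-- In `Λ = ℤ₂[[T]]`, if an ideal `I` satisfies `I + (2,T)³ = (2,T²)`
then `I + (2,T)ⁿ = (2,T²)` for all `n ≥ 3` and hence `I = (2,T²)`.
(In particular this applies to `I = E₀(X)` for a finitely generated `Λ`-module `X`.) -/
theorem stmt_7 (I : Ideal (PowerSeries ℤ_[2]))
    (h : I + (Ideal.span {(2 : PowerSeries ℤ_[2]), PowerSeries.X}) ^ 3 =
      Ideal.span {(2 : PowerSeries ℤ_[2]), PowerSeries.X ^ 2}) :
    (∀ n : ℕ, 3 ≤ n →
      I + (Ideal.span {(2 : PowerSeries ℤ_[2]), PowerSeries.X}) ^ n =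
        Ideal.span {(2 : PowerSeries ℤ_[2]), PowerSeries.X ^ 2}) ∧
    I = Ideal.span {(2 : PowerSeries ℤ_[2]), PowerSeries.X ^ 2} := by
  set M : Ideal (PowerSeries ℤ_[2]) := Ideal.span {(2 : PowerSeries ℤ_[2]), PowerSeries.X}
    with hM
  set J : Ideal (PowerSeries ℤ_[2]) := Ideal.span {(2 : PowerSeries ℤ_[2]), PowerSeries.X ^ 2}
    with hJdef
  have hM2J : M ^ 2 ≤ J := stmt7_M_sq_le
  have hIJ : I ≤ J := by
    calc I ≤ I + M ^ 3 := le_sup_left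
    _ = J := h
  have key : ∀ n : ℕ, 3 ≤ n → I + M ^ n = J := by
    intro n hn
    induction n with
    | zero => omega
    | succ k ih =>
      rcases Nat.lt_or_ge k 3 with hk | hk
      · have : k = 2 := by omega
        subst this
        exact h
      · have hJk := ih hk
        obtain ⟨m, rfl⟩ : ∃ m, k = m + 3 := ⟨k - 3, by omega⟩
        apply le_antisymm
        · apply sup_le hIJ
          calc M ^ (m + 3 + 1) ≤ M ^ 2 := Ideal.pow_le_pow_right (by omega)
          _ ≤ J := hM2J
        · calc J = I + M ^ (m + 3) := hJk.symm
          _ ≤ I + (I + M ^ (m + 3 + 1)) := by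
              apply sup_le_sup_left
              calc M ^ (m + 3) = M ^ (m + 1) * M ^ 2 := by rw [← pow_add]
              _ ≤ M ^ (m + 1) * J := Ideal.mul_mono_right hM2J
              _ = M ^ (m + 1) * (I + M ^ (m + 3)) := by rw [hJk]
              _ = M ^ (m + 1) * I + M ^ (m + 1) * M ^ (m + 3) := Ideal.mul_sup _ _ _
              _ ≤ I + M ^ (m + 3 + 1) := by
                  apply sup_le_sup
                  · exact (Ideal.mul_le_right : M ^ (m + 1) * I ≤ I)
                  · rw [← pow_add]
                    exact Ideal.pow_le_pow_right (by omega)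
          _ = I + M ^ (m + 3 + 1) := by
              rw [Submodule.add_eq_sup, Submodule.add_eq_sup, ← sup_assoc, sup_idem]
  refine ⟨key, le_antisymm hIJ ?_⟩
  have hJfg : J.FG := Submodule.fg_span (Set.toFinite _)
  apply Submodule.le_of_le_smul_of_le_jacobson_bot hJfg stmt7_M_le_jac
  have hMJ : M ^ 3 ≤ M • J := by
    rw [Ideal.smul_eq_mul]
    calc M ^ 3 = M * M ^ 2 := by ring
    _ ≤ M * J := Ideal.mul_mono_right hM2J
  calc J = I + M ^ 3 := h.symm
  _ ≤ I ⊔ M • J := sup_le_sup_left hMJ _
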